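/- If every node has exactly one in-neighbor except at most one node with two in-neighbors, the graph is strongly connected, and the intervals are pairwise disjoint, then every trajectory of the interval consensus dynamics converges to a limit point d* ∈ ℝ^n (each coordinate has a finite limit). -/

import Mathlib

open Finset Filter

/-- Saturation of `z` onto the interval `[p, q]`. -/
noncomputable def sat (p q z : ℝ) : ℝ := max p (min z q)

namespace SparseGraphConvAux

lemma le_sat (p q z : ℝ) : p ≤ sat p q z := le_max_left _ _

lemma sat_le (p q z : ℝ) (h : p ≤ q) : sat p q z ≤ q := max_le h (min_le_right _ _)

lemma self_le_sat (p q z : ℝ) (h : z ≤ q) : z ≤ sat p q z := by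
  rw [sat, min_eq_left h]; exact le_max_right _ _

lemma sat_le_self (p q z : ℝ) (h : p ≤ z) : sat p q z ≤ z :=
  max_le h (min_le_left _ _)

lemma sat_of_ge (p q z : ℝ) (hpq : p ≤ q) (h : q ≤ z) : sat p q z = q := by
  rw [sat, min_eq_right h, max_eq_right hpq]

lemma sat_of_le (p q z : ℝ) (hpq : p ≤ q) (h : z ≤ p) : sat p q z = p := by
  rw [sat, min_eq_left (h.trans hpq), max_eq_left h]

lemma continuous_sat (p q : ℝ) : Continuous (sat p q) :=
  continuous_const.max (continuous_id.min continuous_const)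

/-- Drift lemma: if the derivative is at least `δ > 0` whenever `x ≤ c`
(for large times), then eventually `c ≤ x`. -/
lemma drift_up (x d : ℝ → ℝ) (hx : ∀ t, HasDerivAt x (d t) t)
    (c δ T : ℝ) (hδ : 0 < δ)
    (h : ∀ t, T ≤ t → x t ≤ c → δ ≤ d t) :
    ∀ᶠ t in atTop, c ≤ x t := by
  have hcont : Continuous x :=
    continuous_iff_continuousAt.mpr fun t => (hx t).continuousAt
  have grow : ∀ s t : ℝ, T ≤ s → s ≤ t → (∀ r, s < r → r < t → x r ≤ c) →
      x s + δ * (t - s) ≤ x t := by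
    intro s t hTs hst hint
    have hg : ∀ r : ℝ, HasDerivAt (fun y => x y - δ * y) (d r - δ) r := by
      intro r
      exact ((hx r).sub ((hasDerivAt_id' r).const_mul δ)).congr_deriv (by ring)
    have hmono : MonotoneOn (fun y => x y - δ * y) (Set.Icc s t) := by
      apply monotoneOn_of_deriv_nonneg (convex_Icc s t)
      · exact (hcont.sub (continuous_const.mul continuous_id)).continuousOn
      · intro r _
        exact ((hg r).differentiableAt).differentiableWithinAt
      · intro r hr
        rw [interior_Icc] at hr
        rw [(hg r).deriv]
        have := h r (hTs.trans hr.1.le) (hint r hr.1 hr.2)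
        linarith
    have hkey := hmono (Set.left_mem_Icc.mpr hst) (Set.right_mem_Icc.mpr hst) hst
    simp only at hkey
    nlinarith [hkey]
  have hex : ∃ t₀, T ≤ t₀ ∧ c ≤ x t₀ := by
    by_contra hcon
    push_neg at hcon
    have hxT : x T < c := hcon T le_rfl
    have hdiv : 0 ≤ (c - x T) / δ := div_nonneg (by linarith) hδ.le
    have hT' : T ≤ T + (c - x T) / δ + 1 := by linarith
    have h1 := grow T (T + (c - x T) / δ + 1) le_rfl hT'
      (fun r h1 _ => (hcon r (le_of_lt h1)).le)
    have h2 : x (T + (c - x T) / δ + 1) < c := hcon _ hT'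
    have h3 : δ * (T + (c - x T) / δ + 1 - T) = (c - x T) + δ := by
      have he : T + (c - x T) / δ + 1 - T = (c - x T) / δ + 1 := by ring
      rw [he, mul_add, mul_one, mul_div_cancel₀ _ (ne_of_gt hδ)]
    nlinarith
  obtain ⟨t₀, hTt₀, hct₀⟩ := hex
  rw [eventually_atTop]
  refine ⟨t₀, fun t₁ ht₁ => ?_⟩
  by_contra hcon
  push_neg at hcon
  have hScomp : IsCompact (Set.Icc t₀ t₁ ∩ {r : ℝ | c ≤ x r}) :=
    isCompact_Icc.inter_right (isClosed_le continuous_const hcont)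
  have hSne : (Set.Icc t₀ t₁ ∩ {r : ℝ | c ≤ x r}).Nonempty :=
    ⟨t₀, ⟨le_rfl, ht₁⟩, hct₀⟩
  obtain ⟨⟨hs1, hs2⟩, hs3⟩ := hScomp.sSup_mem hSne
  set s := sSup (Set.Icc t₀ t₁ ∩ {r : ℝ | c ≤ x r}) with hsdef
  simp only [Set.mem_setOf_eq] at hs3
  have hslt : s < t₁ := lt_of_le_of_ne hs2 (fun h => by rw [h] at hs3; linarith)
  have hint : ∀ r, s < r → r < t₁ → x r ≤ c := by
    intro r hr1 hr2
    by_contra hrc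
    push_neg at hrc
    have hrmem : r ∈ Set.Icc t₀ t₁ ∩ {r : ℝ | c ≤ x r} :=
      ⟨⟨hs1.trans hr1.le, hr2.le⟩, hrc.le⟩
    have : r ≤ s := le_csSup (hScomp.bddAbove) hrmem
    linarith
  have := grow s t₁ (hTt₀.trans hs1) hslt.le hint
  nlinarith [mul_pos hδ (by linarith : (0:ℝ) < t₁ - s)]

lemma drift_down (x d : ℝ → ℝ) (hx : ∀ t, HasDerivAt x (d t) t)
    (c δ T : ℝ) (hδ : 0 < δ)
    (h : ∀ t, T ≤ t → c ≤ x t → d t ≤ -δ) :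
    ∀ᶠ t in atTop, x t ≤ c := by
  have key := drift_up (fun t => -x t) (fun t => -d t) (fun t => (hx t).neg) (-c) δ T hδ ?_
  · refine key.mono fun t ht => ?_
    have ht' : -c ≤ -x t := ht
    linarith
  · intro t hT hle
    have hle' : -x t ≤ -c := hle
    have := h t hT (by linarith)
    show δ ≤ -d t
    linarith

/-- Convergence for the scalar ODE `x' = u - A x` with converging input. -/
lemma ode_tendsto (x u : ℝ → ℝ) (A L : ℝ) (hA : 0 < A)
    (hx : ∀ t, HasDerivAt x (u t - A * x t) t)
    (hu : Tendsto u atTop (nhds L)) :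
    Tendsto x atTop (nhds (L / A)) := by
  rw [Metric.tendsto_atTop]
  intro ε hε
  have hεA : 0 < A * (ε / 2) / 2 := by positivity
  obtain ⟨T, hT⟩ := Metric.tendsto_atTop.mp hu (A * (ε / 2) / 2) hεA
  have hAL : A * (L / A) = L := by field_simp
  have hlow : ∀ᶠ t in atTop, L / A - ε / 2 ≤ x t := by
    apply drift_up x _ hx (L / A - ε / 2) (A * (ε / 2) / 2) T hεA
    intro t ht hle
    have h1 := (abs_lt.mp (by rw [← Real.dist_eq]; exact hT t ht)).1
    have h2 : A * x t ≤ A * (L / A - ε / 2) := mul_le_mul_of_nonneg_left hle hA.le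
    rw [mul_sub, hAL] at h2
    nlinarith
  have hhigh : ∀ᶠ t in atTop, x t ≤ L / A + ε / 2 := by
    apply drift_down x _ hx (L / A + ε / 2) (A * (ε / 2) / 2) T hεA
    intro t ht hge
    have h1 := (abs_lt.mp (by rw [← Real.dist_eq]; exact hT t ht)).2
    have h2 : A * (L / A + ε / 2) ≤ A * x t := mul_le_mul_of_nonneg_left hge hA.le
    rw [mul_add, hAL] at h2
    nlinarith
  obtain ⟨N, hN⟩ := eventually_atTop.mp (hlow.and hhigh)
  refine ⟨N, fun t ht => ?_⟩
  obtain ⟨ha1, ha2⟩ := hN t ht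
  rw [Real.dist_eq, abs_lt]
  constructor <;> linarith

/-- Forward invariance of `{x ≤ c}` when the vector field is nonpositive above `c`. -/
lemma forward_invariant_le (x d : ℝ → ℝ) (hx : ∀ t, HasDerivAt x (d t) t)
    (c : ℝ) (h : ∀ t, c < x t → d t ≤ 0) (t₀ : ℝ) (h0 : x t₀ ≤ c) :
    ∀ t, t₀ ≤ t → x t ≤ c := by
  intro t₁ ht₁
  by_contra hcon
  push_neg at hcon
  have hcont : Continuous x :=
    continuous_iff_continuousAt.mpr fun t => (hx t).continuousAt
  have hScomp : IsCompact (Set.Icc t₀ t₁ ∩ {r : ℝ | x r ≤ c}) :=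
    isCompact_Icc.inter_right (isClosed_le hcont continuous_const)
  have hSne : (Set.Icc t₀ t₁ ∩ {r : ℝ | x r ≤ c}).Nonempty := ⟨t₀, ⟨le_rfl, ht₁⟩, h0⟩
  obtain ⟨⟨hs1, hs2⟩, hs3⟩ := hScomp.sSup_mem hSne
  set s := sSup (Set.Icc t₀ t₁ ∩ {r : ℝ | x r ≤ c}) with hsdef
  simp only [Set.mem_setOf_eq] at hs3
  have hslt : s < t₁ := lt_of_le_of_ne hs2 (fun h' => by rw [h'] at hs3; linarith)
  have hint : ∀ r, s < r → r < t₁ → c < x r := by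
    intro r hr1 hr2
    by_contra hrc
    push_neg at hrc
    have : r ≤ s := le_csSup hScomp.bddAbove ⟨⟨hs1.trans hr1.le, hr2.le⟩, hrc⟩
    linarith
  have hanti : AntitoneOn x (Set.Icc s t₁) := by
    apply antitoneOn_of_deriv_nonpos (convex_Icc s t₁) hcont.continuousOn
    · intro r _
      exact (hx r).differentiableAt.differentiableWithinAt
    · intro r hr
      rw [interior_Icc] at hr
      rw [(hx r).deriv]
      exact h r (hint r hr.1 hr.2)
  have := hanti (Set.left_mem_Icc.mpr hslt.le) (Set.right_mem_Icc.mpr hslt.le) hslt.le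
  linarith

/-- If all non-self in-neighbors of `v` have intervals above `q v`,
then eventually the saturated output of `v` is pinned at `q v`. -/
lemma pin_high (n : ℕ) (a : Fin (n + 1) → Fin (n + 1) → ℝ) (ha : ∀ i j, 0 ≤ a i j)
    (p q : Fin (n + 1) → ℝ) (hpq : ∀ m, p m ≤ q m)
    (x : ℝ → Fin (n + 1) → ℝ)
    (hx : ∀ i t, HasDerivAt (fun s => x s i)
      (∑ j, a i j * (sat (p j) (q j) (x t j) - x t i)) t)
    (v u : Fin (n + 1)) (hu : u ≠ v) (hau : 0 < a v u)
    (habove : ∀ j, j ≠ v → 0 < a v j → q v < p j) :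
    ∀ᶠ t in atTop, sat (p v) (q v) (x t v) = q v := by
  have hup : q v < p u := habove u hu hau
  have hδ : 0 < a v u * (p u - q v) := mul_pos hau (by linarith)
  have hev := drift_up (fun s => x s v)
    (fun t => ∑ j, a v j * (sat (p j) (q j) (x t j) - x t v)) (hx v)
    (q v) (a v u * (p u - q v)) 0 hδ ?_
  · exact hev.mono fun t ht => sat_of_ge _ _ _ (hpq v) ht
  · intro t _ hle
    have hle' : x t v ≤ q v := hle
    have hterm : ∀ j ∈ Finset.univ, (0:ℝ) ≤ a v j * (sat (p j) (q j) (x t j) - x t v) := by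
      intro j _
      rcases eq_or_lt_of_le (ha v j) with h0 | hpos
      · rw [← h0]; simp
      · apply mul_nonneg hpos.le
        rcases eq_or_ne j v with rfl | hne
        · have := self_le_sat (p j) (q j) (x t j) hle'
          linarith
        · have h1 := habove j hne hpos
          have h2 := le_sat (p j) (q j) (x t j)
          linarith
    calc a v u * (p u - q v) ≤ a v u * (sat (p u) (q u) (x t u) - x t v) := by
          apply mul_le_mul_of_nonneg_left _ hau.le
          have := le_sat (p u) (q u) (x t u); linarith
      _ ≤ ∑ j, a v j * (sat (p j) (q j) (x t j) - x t v) :=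
          Finset.single_le_sum hterm (Finset.mem_univ u)

/-- If all non-self in-neighbors of `v` have intervals below `p v`,
then eventually the saturated output of `v` is pinned at `p v`. -/
lemma pin_low (n : ℕ) (a : Fin (n + 1) → Fin (n + 1) → ℝ) (ha : ∀ i j, 0 ≤ a i j)
    (p q : Fin (n + 1) → ℝ) (hpq : ∀ m, p m ≤ q m)
    (x : ℝ → Fin (n + 1) → ℝ)
    (hx : ∀ i t, HasDerivAt (fun s => x s i)
      (∑ j, a i j * (sat (p j) (q j) (x t j) - x t i)) t)
    (v u : Fin (n + 1)) (hu : u ≠ v) (hau : 0 < a v u)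
    (hbelow : ∀ j, j ≠ v → 0 < a v j → q j < p v) :
    ∀ᶠ t in atTop, sat (p v) (q v) (x t v) = p v := by
  have hup : q u < p v := hbelow u hu hau
  have hδ : 0 < a v u * (p v - q u) := mul_pos hau (by linarith)
  have hev := drift_down (fun s => x s v)
    (fun t => ∑ j, a v j * (sat (p j) (q j) (x t j) - x t v)) (hx v)
    (p v) (a v u * (p v - q u)) 0 hδ ?_
  · exact hev.mono fun t ht => sat_of_le _ _ _ (hpq v) ht
  · intro t _ hge
    have hge' : p v ≤ x t v := hge
    have hterm : ∀ j ∈ Finset.univ.erase u,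
        a v j * (sat (p j) (q j) (x t j) - x t v) ≤ 0 := by
      intro j hj
      rcases eq_or_lt_of_le (ha v j) with h0 | hpos
      · rw [← h0]; simp
      · apply mul_nonpos_of_nonneg_of_nonpos hpos.le
        rcases eq_or_ne j v with rfl | hne
        · have := sat_le_self (p j) (q j) (x t j) hge'
          linarith
        · have h1 := hbelow j hne hpos
          have h2 := sat_le (p j) (q j) (x t j) (hpq j)
          linarith
    have hsingle : a v u * (sat (p u) (q u) (x t u) - x t v) ≤ -(a v u * (p v - q u)) := by
      have h2 := sat_le (p u) (q u) (x t u) (hpq u)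
      have : sat (p u) (q u) (x t u) - x t v ≤ -(p v - q u) := by linarith
      calc a v u * (sat (p u) (q u) (x t u) - x t v) ≤ a v u * (-(p v - q u)) :=
            mul_le_mul_of_nonneg_left this hau.le
        _ = -(a v u * (p v - q u)) := by ring
    calc (∑ j, a v j * (sat (p j) (q j) (x t j) - x t v))
        = a v u * (sat (p u) (q u) (x t u) - x t v) +
          ∑ j ∈ Finset.univ.erase u, a v j * (sat (p j) (q j) (x t j) - x t v) :=
          (Finset.add_sum_erase _ _ (Finset.mem_univ u)).symm
      _ ≤ -(a v u * (p v - q u)) + 0 :=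
          add_le_add hsingle (Finset.sum_nonpos hterm)
      _ = -(a v u * (p v - q u)) := by ring

end SparseGraphConvAux

open SparseGraphConvAux

/-- On a strongly connected digraph where every node has at most two
in-neighbors, with equality for at most one node, and pairwise disjoint
intervals, every trajectory of the interval consensus dynamics converges to a
limit point `d* ∈ ℝ^n`. -/
theorem sparse_graph_convergence
    (n : ℕ) (a : Fin (n + 1) → Fin (n + 1) → ℝ) (ha : ∀ i j, 0 ≤ a i j)
    (hSC : ∀ i j : Fin (n + 1), Relation.ReflTransGen (fun u v => 0 < a v u) i j)
    (hdeg : ∀ m, (Finset.univ.filter fun j => 0 < a m j).card ≤ 2)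
    (hdeg2 : (Finset.univ.filter fun m =>
      (Finset.univ.filter fun j => 0 < a m j).card = 2).card ≤ 1)
    (p q : Fin (n + 1) → ℝ) (hpq : ∀ m, p m ≤ q m)
    (hdisj : ∀ m₁ m₂ : Fin (n + 1), m₁ ≠ m₂ →
      Disjoint (Set.Icc (p m₁) (q m₁)) (Set.Icc (p m₂) (q m₂)))
    (x : ℝ → Fin (n + 1) → ℝ)
    (hx : ∀ i t, HasDerivAt (fun s => x s i)
      (∑ j, a i j * (sat (p j) (q j) (x t j) - x t i)) t) :
    ∃ d : Fin (n + 1) → ℝ, ∀ i, Tendsto (fun t => x t i) atTop (nhds (d i)) := by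
  classical
  rcases Nat.eq_zero_or_pos n with rfl | hn
  · -- one node
    have hone : ∀ t, HasDerivAt (fun s => x s 0)
        (a 0 0 * (sat (p 0) (q 0) (x t 0) - x t 0)) t := by
      intro t
      have := hx 0 t
      simpa [Fin.sum_univ_succ] using this
    suffices hconv : ∃ ℓ, Tendsto (fun t => x t 0) atTop (nhds ℓ) by
      obtain ⟨ℓ, hℓ⟩ := hconv
      refine ⟨fun _ => ℓ, fun i => ?_⟩
      have hi : i = 0 := by omega
      rw [hi]; exact hℓ
    rcases eq_or_lt_of_le (ha 0 0) with hb0 | hbpos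
    · -- zero weight: constant solution
      have hder : ∀ t, HasDerivAt (fun s => x s 0) 0 t := by
        intro t
        have := hone t
        rw [← hb0] at this
        simpa using this
      have hdiff : Differentiable ℝ (fun s => x s 0) := fun t => (hder t).differentiableAt
      have hconst : ∀ t : ℝ, x t 0 = x 0 0 := fun t =>
        is_const_of_deriv_eq_zero hdiff (fun t => (hder t).deriv) t 0
      exact ⟨x 0 0, Tendsto.congr (fun t => (hconst t).symm) tendsto_const_nhds⟩
    · by_cases hcase : ∀ t : ℝ, q 0 < x t 0
      · -- always above the interval: antitone and bounded below
        have hder : ∀ t : ℝ, deriv (fun s => x s 0) t ≤ 0 := by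
          intro t
          rw [(hone t).deriv]
          have h1 : sat (p 0) (q 0) (x t 0) ≤ q 0 := sat_le _ _ _ (hpq 0)
          have h2 := hcase t
          have : sat (p 0) (q 0) (x t 0) - x t 0 ≤ 0 := by linarith
          exact mul_nonpos_of_nonneg_of_nonpos hbpos.le this
        have hanti : Antitone (fun s => x s 0) :=
          antitone_of_deriv_nonpos (fun t => (hone t).differentiableAt) hder
        have hbdd : BddBelow (Set.range (fun s => x s 0)) :=
          ⟨q 0, by rintro _ ⟨t, rfl⟩; exact (hcase t).le⟩
        exact ⟨_, tendsto_atTop_ciInf hanti hbdd⟩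
      · push_neg at hcase
        obtain ⟨t₀, ht₀⟩ := hcase
        have hinv : ∀ t, t₀ ≤ t → x t 0 ≤ q 0 := by
          apply forward_invariant_le (fun s => x s 0) _ hone (q 0) _ t₀ ht₀
          intro t hgt
          have h1 : sat (p 0) (q 0) (x t 0) ≤ q 0 := sat_le _ _ _ (hpq 0)
          have : sat (p 0) (q 0) (x t 0) - x t 0 ≤ 0 := by linarith
          exact mul_nonpos_of_nonneg_of_nonpos hbpos.le this
        have hcont : Continuous (fun s => x s 0) :=
          continuous_iff_continuousAt.mpr fun t => (hone t).continuousAt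
        have hmono : MonotoneOn (fun s => x s 0) (Set.Ici t₀) := by
          apply monotoneOn_of_deriv_nonneg (convex_Ici t₀) hcont.continuousOn
          · intro r _
            exact (hone r).differentiableAt.differentiableWithinAt
          · intro r hr
            rw [interior_Ici] at hr
            rw [(hone r).deriv]
            have h1 : x r 0 ≤ sat (p 0) (q 0) (x r 0) :=
              self_le_sat _ _ _ (hinv r (le_of_lt hr))
            have : 0 ≤ sat (p 0) (q 0) (x r 0) - x r 0 := by linarith
            exact mul_nonneg hbpos.le this
        have hgmono : Monotone (fun t : ℝ => x (max t t₀) 0) := fun s t hst =>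
          hmono (Set.mem_Ici.mpr (le_max_right s t₀)) (Set.mem_Ici.mpr (le_max_right t t₀))
            (max_le_max hst le_rfl)
        have hgbdd : BddAbove (Set.range (fun t : ℝ => x (max t t₀) 0)) :=
          ⟨q 0, by rintro _ ⟨t, rfl⟩; exact hinv _ (le_max_right t t₀)⟩
        refine ⟨_, Tendsto.congr' ?_ (tendsto_atTop_ciSup hgmono hgbdd)⟩
        filter_upwards [eventually_ge_atTop t₀] with t ht
        rw [max_eq_left ht]
  · -- n ≥ 1
    -- disjoint intervals are totally ordered
    have horder : ∀ m₁ m₂, m₁ ≠ m₂ → q m₁ < p m₂ ∨ q m₂ < p m₁ := by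
      intro m₁ m₂ hne
      by_contra hc
      push_neg at hc
      have h1 : max (p m₁) (p m₂) ∈ Set.Icc (p m₁) (q m₁) :=
        ⟨le_max_left _ _, max_le (hpq m₁) hc.1⟩
      have h2 : max (p m₁) (p m₂) ∈ Set.Icc (p m₂) (q m₂) :=
        ⟨le_max_right _ _, max_le hc.2 (hpq m₂)⟩
      exact Set.disjoint_left.mp (hdisj m₁ m₂ hne) h1 h2
    -- every node has a non-self in-neighbor
    have hNS : ∀ v, ∃ u, u ≠ v ∧ 0 < a v u := by
      intro v
      by_contra hcon
      push_neg at hcon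
      obtain ⟨i, hi⟩ := Fintype.exists_ne_of_one_lt_card
        (by simp only [Fintype.card_fin]; omega) v
      have key : ∀ j, Relation.ReflTransGen (fun u w => 0 < a w u) j v → j = v := by
        intro j hj
        induction hj using Relation.ReflTransGen.head_induction_on with
        | refl => rfl
        | head h' hrest ih =>
          rename_i b c
          subst ih
          by_contra hbv
          exact absurd h' (not_lt.mpr (hcon b hbv))
      exact hi (key i (hSC i v))
    -- total in-weight is positive
    have hApos : ∀ v, 0 < ∑ j, a v j := by
      intro v
      obtain ⟨u, _, hau⟩ := hNS v
      exact Finset.sum_pos' (fun j _ => ha v j) ⟨u, Finset.mem_univ u, hau⟩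
    -- derivative in input/decay form
    have hx' : ∀ v t, HasDerivAt (fun s => x s v)
        ((∑ j, a v j * sat (p j) (q j) (x t j)) - (∑ j, a v j) * x t v) t := by
      intro v t
      have hder := hx v t
      have heq : (∑ j, a v j * (sat (p j) (q j) (x t j) - x t v))
          = (∑ j, a v j * sat (p j) (q j) (x t j)) - (∑ j, a v j) * x t v := by
        rw [Finset.sum_mul, ← Finset.sum_sub_distrib]
        exact Finset.sum_congr rfl fun j _ => by ring
      rwa [heq] at hder
    -- pinning for nodes with one-sided in-neighborhood
    have hpin : ∀ v, ∃ c : ℝ,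
        ((∀ j, j ≠ v → 0 < a v j → q v < p j) ∨ (∀ j, j ≠ v → 0 < a v j → q j < p v)) →
        ∀ᶠ t in atTop, sat (p v) (q v) (x t v) = c := by
      intro v
      obtain ⟨u, huv, hau⟩ := hNS v
      by_cases hA : ∀ j, j ≠ v → 0 < a v j → q v < p j
      · exact ⟨q v, fun _ => pin_high n a ha p q hpq x hx v u huv hau hA⟩
      · by_cases hB : ∀ j, j ≠ v → 0 < a v j → q j < p v
        · exact ⟨p v, fun _ => pin_low n a ha p q hpq x hx v u huv hau hB⟩
        · exact ⟨0, fun h => absurd h (by tauto)⟩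
    choose S hS using hpin
    -- dichotomy: one-sided, or genuinely two straddling in-neighbors
    have hdich : ∀ v,
        ((∀ j, j ≠ v → 0 < a v j → q v < p j) ∨ (∀ j, j ≠ v → 0 < a v j → q j < p v)) ∨
        ((Finset.univ.filter fun j => 0 < a v j).card = 2 ∧ a v v = 0) := by
      intro v
      by_cases hA : ∀ j, j ≠ v → 0 < a v j → q v < p j
      · exact Or.inl (Or.inl hA)
      · by_cases hB : ∀ j, j ≠ v → 0 < a v j → q j < p v
        · exact Or.inl (Or.inr hB)
        · right
          push_neg at hA hB
          obtain ⟨j₁, hj₁v, hj₁pos, hj₁⟩ := hA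
          obtain ⟨j₂, hj₂v, hj₂pos, hj₂⟩ := hB
          have hq₁ : q j₁ < p v := (horder v j₁ (Ne.symm hj₁v)).resolve_left (not_lt.mpr hj₁)
          have hq₂ : q v < p j₂ := (horder v j₂ (Ne.symm hj₂v)).resolve_right (not_lt.mpr hj₂)
          have hne12 : j₁ ≠ j₂ := by
            intro hEq
            rw [hEq] at hq₁
            have h3 := hpq v
            have h4 := hpq j₂
            linarith
          have hvv : a v v = 0 := by
            by_contra hvv'
            have hvpos : 0 < a v v := lt_of_le_of_ne (ha v v) (Ne.symm hvv')
            have hsub : {v, j₁, j₂} ⊆ Finset.univ.filter (fun j => 0 < a v j) := by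
              intro j hj
              simp only [Finset.mem_insert, Finset.mem_singleton] at hj
              rcases hj with rfl | rfl | rfl <;>
                simp [Finset.mem_filter, hvpos, hj₁pos, hj₂pos]
            have hcard : ({v, j₁, j₂} : Finset (Fin (n+1))).card = 3 := by
              rw [Finset.card_insert_of_notMem (by simp [Ne.symm hj₁v, Ne.symm hj₂v]),
                Finset.card_insert_of_notMem (by simp [hne12]), Finset.card_singleton]
            have := Finset.card_le_card hsub
            rw [hcard] at this
            have := hdeg v
            omega
          refine ⟨?_, hvv⟩
          have hsub : {j₁, j₂} ⊆ Finset.univ.filter (fun j => 0 < a v j) := by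
            intro j hj
            simp only [Finset.mem_insert, Finset.mem_singleton] at hj
            rcases hj with rfl | rfl <;> simp [Finset.mem_filter, hj₁pos, hj₂pos]
          have hcard : ({j₁, j₂} : Finset (Fin (n+1))).card = 2 := by
            rw [Finset.card_insert_of_notMem (by simp [hne12]), Finset.card_singleton]
          have h2le := Finset.card_le_card hsub
          rw [hcard] at h2le
          exact le_antisymm (hdeg v) h2le
    -- every node's saturated output converges
    have hsatlim : ∀ v, ∃ L, Tendsto (fun t => sat (p v) (q v) (x t v)) atTop (nhds L) := by
      intro v
      rcases hdich v with hP | ⟨hvD, hvv⟩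
      · refine ⟨S v, Tendsto.congr' ?_ tendsto_const_nhds⟩
        filter_upwards [hS v hP] with t ht using ht.symm
      · -- deferred node: all its in-neighbors are pinned
        have hinputs : ∀ j, 0 < a v j → ∀ᶠ t in atTop, sat (p j) (q j) (x t j) = S j := by
          intro j hj
          have hjv : j ≠ v := by
            intro h
            rw [h, hvv] at hj
            exact lt_irrefl _ hj
          have hjP : (∀ k, k ≠ j → 0 < a j k → q j < p k) ∨
              (∀ k, k ≠ j → 0 < a j k → q k < p j) := by
            rcases hdich j with h | ⟨hjD, _⟩
            · exact h
            · exfalso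
              have hmemv : v ∈ Finset.univ.filter (fun m =>
                  (Finset.univ.filter fun j => 0 < a m j).card = 2) := by
                simp [Finset.mem_filter, hvD]
              have hmemj : j ∈ Finset.univ.filter (fun m =>
                  (Finset.univ.filter fun j => 0 < a m j).card = 2) := by
                simp [Finset.mem_filter, hjD]
              exact hjv (Finset.card_le_one.mp hdeg2 j hmemj v hmemv)
          exact hS j hjP
        have hulim : Tendsto (fun t => ∑ j, a v j * sat (p j) (q j) (x t j)) atTop
            (nhds (∑ j, a v j * S j)) := by
          apply tendsto_finset_sum
          intro j _
          rcases eq_or_lt_of_le (ha v j) with h0 | hpos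
          · rw [← h0]
            simp
          · refine Tendsto.const_mul _ (Tendsto.congr' ?_ tendsto_const_nhds)
            filter_upwards [hinputs j hpos] with t ht using ht.symm
        have hxv := ode_tendsto (fun s => x s v) _ _ _ (hApos v) (hx' v) hulim
        exact ⟨_, ((continuous_sat (p v) (q v)).tendsto _).comp hxv⟩
    choose Ls hLs using hsatlim
    have hfinal : ∀ v, ∃ ℓ, Tendsto (fun t => x t v) atTop (nhds ℓ) := by
      intro v
      have hulim : Tendsto (fun t => ∑ j, a v j * sat (p j) (q j) (x t j)) atTop
          (nhds (∑ j, a v j * Ls j)) :=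
        tendsto_finset_sum _ (fun j _ => (hLs j).const_mul _)
      exact ⟨_, ode_tendsto (fun s => x s v) _ _ _ (hApos v) (hx' v) hulim⟩
    choose d hd using hfinal
    exact ⟨d, hd⟩
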